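/- Every one-dimensional countable SFT X ⊆ Σ^ℤ has the property that each of its configurations is ultimately periodic to the left and to the right. -/

import Mathlib

/-- The word `p` occurs in the configuration `x` (at some position). -/
def occursIn {A : Type*} (p : List A) (x : ℤ → A) : Prop :=
  ∃ i : ℤ, ∀ j : Fin p.length, x (i + (j : ℕ)) = p.get j

lemma not_countable_nat_bool : ¬ Countable (ℕ → Bool) := by
  intro h
  obtain ⟨f, hf⟩ := exists_injective_nat (ℕ → Bool)
  classical
  have hg : Function.Injective (fun s : Set ℕ => fun n => decide (n ∈ s)) := by
    intro s t hst
    ext n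
    have := congrFun hst n
    simpa using this
  exact Function.cantor_injective (f ∘ _) (hf.comp hg)

lemma occursIn_of_window {A : Type*} (p : List A) (x y : ℤ → A)
    (h : ∀ i : ℤ, ∃ i' : ℤ, ∀ j : ℤ, 0 ≤ j → j < (p.length : ℤ) → y (i + j) = x (i' + j)) :
    occursIn p y → occursIn p x := by
  rintro ⟨i, hi⟩
  obtain ⟨i', h'⟩ := h i
  refine ⟨i', fun j => ?_⟩
  have := h' ((j : ℕ) : ℤ) (by positivity) (by exact_mod_cast j.2)
  exact this.symm.trans (hi j)

lemma right_ultimately_periodic {A : Type*} [Finite A] (F : Set (List A)) (hF : F.Finite)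
    (hcount : {x : ℤ → A | ∀ w ∈ F, ¬ occursIn w x}.Countable)
    (x : ℤ → A) (hx : ∀ w ∈ F, ¬ occursIn w x) :
    ∃ p : ℤ, 0 < p ∧ ∃ N : ℤ, ∀ n : ℤ, N ≤ n → x (n + p) = x n := by
  classical
  set L : ℕ := hF.toFinset.sup List.length + 1 with hLdef
  have hwlen : ∀ w ∈ F, w.length < L := fun w hw =>
    Nat.lt_succ_of_le (Finset.le_sup (hF.mem_toFinset.2 hw))
  have hL1 : (1:ℤ) ≤ (L:ℤ) := by
    have : 1 ≤ L := Nat.succ_le_succ (Nat.zero_le _)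
    exact_mod_cast this
  -- pigeonhole: some length-L window appears at infinitely many positions L*k
  obtain ⟨wv, hwv⟩ :=
    Finite.exists_infinite_fiber (fun (k : ℕ) => fun (j : Fin L) => x ((L:ℤ) * k + ((j:ℕ):ℤ)))
  set T : Set ℕ :=
    (fun (k : ℕ) => fun (j : Fin L) => x ((L:ℤ) * k + ((j:ℕ):ℤ))) ⁻¹' {wv} with hTdef
  have hTinf : T.Infinite := (Set.infinite_coe_iff (s := T)).mp hwv
  have hwin : ∀ s ∈ T, ∀ t ∈ T, ∀ j : ℤ, 0 ≤ j → j < (L:ℤ) →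
      x ((L:ℤ)*s + j) = x ((L:ℤ)*t + j) := by
    intro s hs t ht j h0 h1
    have hjL : j.toNat < L := by omega
    have hs' : (fun (j : Fin L) => x ((L:ℤ) * s + ((j:ℕ):ℤ))) = wv := hs
    have ht' : (fun (j : Fin L) => x ((L:ℤ) * t + ((j:ℕ):ℤ))) = wv := ht
    have key := (congrFun hs' ⟨j.toNat, hjL⟩).trans (congrFun ht' ⟨j.toNat, hjL⟩).symm
    simpa [Int.toNat_of_nonneg h0] using key
  obtain ⟨t0, ht0T, -⟩ := hTinf.exists_gt 0
  obtain ⟨t1, ht1T, ht01⟩ := hTinf.exists_gt t0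
  set p1 : ℤ := (L:ℤ) * t0 with hp1
  set p2 : ℤ := (L:ℤ) * t1 with hp2
  have hp12 : p1 < p2 := by
    have : (t0:ℤ) < (t1:ℤ) := by exact_mod_cast ht01
    have := mul_lt_mul_of_pos_left this (show (0:ℤ) < L by omega)
    simpa [hp1, hp2] using this
  by_cases hper : ∀ t ∈ T, ∀ r : ℤ, 0 ≤ r → p2 + r < (L:ℤ)*t → x (p1 + r) = x (p2 + r)
  · -- periodic case
    refine ⟨p2 - p1, by omega, p1, fun n hn => ?_⟩
    set r : ℤ := n - p1 with hr
    have hr0 : 0 ≤ r := by omega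
    obtain ⟨t, htT, htgt⟩ := hTinf.exists_gt (t1 + r.toNat)
    have h1 : (t1:ℤ) + (r.toNat:ℤ) < (t:ℤ) := by exact_mod_cast htgt
    have h2 : ((r.toNat:ℤ)) = r := Int.toNat_of_nonneg hr0
    have h3 : (0:ℤ) ≤ (t:ℤ) - t1 := by omega
    have h4 : 1 * ((t:ℤ) - t1) ≤ (L:ℤ) * ((t:ℤ) - t1) := mul_le_mul_of_nonneg_right hL1 h3
    have h5 : (L:ℤ) * ((t:ℤ) - t1) = (L:ℤ)*t - p2 := by rw [hp2]; ring
    have hrt : p2 + r < (L:ℤ)*t := by omega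
    have key := hper t htT r hr0 hrt
    rw [show n + (p2 - p1) = p2 + r by omega, show n = p1 + r by omega]
    exact key.symm
  · -- non-periodic case: build uncountably many configurations
    push_neg at hper
    obtain ⟨t3, ht3T, rs, hrs0, hrslt, hrsne⟩ := hper
    set p3 : ℤ := (L:ℤ) * t3 with hp3
    have hp23 : p2 < p3 := by omega
    set la : ℤ := p2 - p1 with hla
    set lb : ℤ := p3 - p2 with hlb
    set m : ℤ := p3 - p1 with hm
    have hm0 : 0 < m := by omega
    have hLla : (L:ℤ) ≤ la := by
      have h1 : (t0:ℤ) + 1 ≤ (t1:ℤ) := by exact_mod_cast ht01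
      have : (L:ℤ) * ((t0:ℤ) + 1) ≤ (L:ℤ) * t1 := mul_le_mul_of_nonneg_left h1 (by omega)
      have h2 : (L:ℤ) * ((t0:ℤ) + 1) = p1 + L := by rw [hp1]; ring
      omega
    have hLlb : (L:ℤ) ≤ lb := by
      have ht13 : (t1:ℤ) < (t3:ℤ) := by
        by_contra hc
        push_neg at hc
        have : (L:ℤ) * t3 ≤ (L:ℤ) * t1 := mul_le_mul_of_nonneg_left hc (by omega)
        omega
      have h1 : (t1:ℤ) + 1 ≤ (t3:ℤ) := by omega
      have : (L:ℤ) * ((t1:ℤ) + 1) ≤ (L:ℤ) * t3 := mul_le_mul_of_nonneg_left h1 (by omega)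
      have h2 : (L:ℤ) * ((t1:ℤ) + 1) = p2 + L := by rw [hp2]; ring
      omega
    have hmsum : m = la + lb := by omega
    have hrslb : rs < lb := by omega
    -- the two blocks, as a function of a bool
    set blk : Bool → ℤ → A := fun c r =>
      if c then (if r < lb then x (p2 + r) else x (p1 + (r - lb))) else x (p1 + r) with hblk
    set Φ : (ℕ → Bool) → ℤ → A := fun α n =>
      if n < p1 then x n else blk (α ((n - p1) / m).toNat) ((n - p1) % m) with hPhi
    have hA : ∀ (α : ℕ → Bool) (t : ℕ) (r : ℤ), 0 ≤ r → r < m →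
        Φ α (p1 + (t:ℤ) * m + r) = blk (α t) r := by
      intro α t r h0 h1
      have htm : (0:ℤ) ≤ (t:ℤ) * m := mul_nonneg (by positivity) hm0.le
      rw [hPhi]
      simp only
      rw [if_neg (by omega)]
      have he : p1 + (t:ℤ)*m + r - p1 = r + (t:ℤ)*m := by ring
      rw [he, Int.add_mul_ediv_right _ _ (ne_of_gt hm0), Int.ediv_eq_zero_of_lt h0 h1,
        Int.add_mul_emod_self_right, Int.emod_eq_of_lt h0 h1]
      norm_num
    have hblk_small : ∀ (c : Bool) (r : ℤ), 0 ≤ r → r < (L:ℤ) → blk c r = x (p1 + r) := by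
      intro c r h0 h1
      cases c
      · rw [hblk]; simp
      · rw [hblk]
        simp only [if_true]
        rw [if_pos (by omega)]
        exact hwin t1 ht1T t0 ht0T r h0 h1
    have hagree : ∀ (α : ℕ → Bool) (n : ℤ), n < p1 + (L:ℤ) → Φ α n = x n := by
      intro α n hn
      by_cases h : n < p1
      · rw [hPhi]; simp only; rw [if_pos h]
      · push_neg at h
        set r : ℤ := n - p1 with hr
        have harg : p1 + ((0:ℕ):ℤ) * m + r = n := by push_cast; omega
        calc Φ α n = Φ α (p1 + ((0:ℕ):ℤ) * m + r) := by rw [harg]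
          _ = blk (α 0) r := hA α 0 r (by omega) (by omega)
          _ = x (p1 + r) := hblk_small _ r (by omega) (by omega)
          _ = x n := by rw [show p1 + r = n by omega]
    -- the window lemma
    have hwind : ∀ (α : ℕ → Bool) (i : ℤ) (ℓ : ℕ), ℓ ≤ L →
        ∃ i', ∀ j : ℤ, 0 ≤ j → j < (ℓ:ℤ) → Φ α (i + j) = x (i' + j) := by
      intro α i ℓ hℓ
      have hℓL : (ℓ:ℤ) ≤ (L:ℤ) := by exact_mod_cast hℓ
      by_cases hi : i ≤ p1
      · exact ⟨i, fun j h0 h1 => hagree α (i + j) (by omega)⟩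
      · push_neg at hi
        set d0 : ℤ := i - p1 with hd0
        set t : ℕ := (d0 / m).toNat with ht
        set r0 : ℤ := d0 % m with hr0
        have htz : ((t:ℕ):ℤ) = d0 / m := Int.toNat_of_nonneg (Int.ediv_nonneg (by omega) hm0.le)
        have hr0a : 0 ≤ r0 := Int.emod_nonneg _ (ne_of_gt hm0)
        have hr0b : r0 < m := Int.emod_lt_of_pos _ hm0
        have hdm := Int.mul_ediv_add_emod d0 m
        have htm : (t:ℤ) * m = m * (d0 / m) := by rw [htz]; ring
        have hi_eq : i = p1 + (t:ℤ)*m + r0 := by omega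
        have hval1 : ∀ j : ℤ, 0 ≤ j → r0 + j < m → Φ α (i + j) = blk (α t) (r0 + j) := by
          intro j h0 h1
          have : i + j = p1 + (t:ℤ)*m + (r0 + j) := by omega
          rw [this]
          exact hA α t (r0 + j) (by omega) h1
        have hval2 : ∀ j : ℤ, m ≤ r0 + j → r0 + j - m < (L:ℤ) →
            Φ α (i + j) = x (p1 + (r0 + j - m)) := by
          intro j h0 h1
          have hexp : ((t+1 : ℕ):ℤ) * m = (t:ℤ)*m + m := by push_cast; ring
          have hc : i + j = p1 + ((t+1 : ℕ):ℤ)*m + (r0 + j - m) := by omega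
          rw [hc, hA α (t+1) (r0 + j - m) (by omega) (by omega)]
          exact hblk_small _ _ (by omega) h1
        cases hαt : α t with
        | false =>
          refine ⟨p1 + r0, fun j h0 h1 => ?_⟩
          by_cases hjm : r0 + j < m
          · rw [hval1 j h0 hjm, hαt, hblk]
            simp only [if_neg (Bool.false_ne_true)]
            rw [show p1 + (r0 + j) = p1 + r0 + j by ring]
          · push_neg at hjm
            rw [hval2 j hjm (by omega)]
            have := hwin t0 ht0T t3 ht3T (r0 + j - m) (by omega) (by omega)
            rw [← hp1, ← hp3] at this
            rw [this, show p3 + (r0 + j - m) = p1 + r0 + j by omega]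
        | true =>
          by_cases hrlb : r0 < lb
          · refine ⟨p2 + r0, fun j h0 h1 => ?_⟩
            have hjm : r0 + j < m := by omega
            rw [hval1 j h0 hjm, hαt, hblk]
            simp only [if_pos]
            by_cases he : r0 + j < lb
            · rw [if_pos he, show p2 + (r0 + j) = p2 + r0 + j by ring]
            · rw [if_neg he]
              have := hwin t0 ht0T t3 ht3T (r0 + j - lb) (by omega) (by omega)
              rw [← hp1, ← hp3] at this
              rw [this, show p3 + (r0 + j - lb) = p2 + r0 + j by omega]
          · push_neg at hrlb
            refine ⟨p1 + (r0 - lb), fun j h0 h1 => ?_⟩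
            by_cases hjm : r0 + j < m
            · rw [hval1 j h0 hjm, hαt, hblk]
              simp only [if_pos]
              rw [if_neg (by omega)]
              rw [show p1 + (r0 + j - lb) = p1 + (r0 - lb) + j by ring]
            · push_neg at hjm
              rw [hval2 j hjm (by omega)]
              have := hwin t0 ht0T t1 ht1T (r0 + j - m) (by omega) (by omega)
              rw [← hp1, ← hp2] at this
              rw [this, show p2 + (r0 + j - m) = p1 + (r0 - lb) + j by omega]
    -- all Φ α are in the SFT
    have hmem : ∀ α : ℕ → Bool, Φ α ∈ {x : ℤ → A | ∀ w ∈ F, ¬ occursIn w x} := by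
      intro α w hw hocc
      exact hx w hw (occursIn_of_window w x (Φ α)
        (fun i => hwind α i w.length (le_of_lt (hwlen w hw))) hocc)
    -- Φ is injective
    have hinj : Function.Injective Φ := by
      intro α β h
      funext t
      by_contra hne
      have h1 := congrFun h (p1 + (t:ℤ)*m + rs)
      rw [hA α t rs hrs0 (by omega), hA β t rs hrs0 (by omega)] at h1
      have hdiff : blk true rs ≠ blk false rs := by
        rw [hblk]
        simp only [if_true, if_neg (Bool.false_ne_true)]
        rw [if_pos hrslb]
        exact fun hc => hrsne (hc.symm)
      cases hα : α t <;> cases hβ : β t <;> rw [hα, hβ] at h1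
      · exact hne (hα.trans hβ.symm)
      · exact hdiff h1.symm
      · exact hdiff h1
      · exact hne (hα.trans hβ.symm)
    -- contradiction with countability
    exfalso
    have h1 : (Set.range Φ).Countable := hcount.mono (Set.range_subset_iff.mpr hmem)
    have h2 := h1.to_subtype
    exact not_countable_nat_bool (Countable.of_equiv _ (Equiv.ofInjective Φ hinj).symm)

lemma occursIn_reverse {A : Type*} (w : List A) (y : ℤ → A) :
    occursIn w y → occursIn w.reverse (fun n => y (-n)) := by
  rintro ⟨i, hi⟩
  refine ⟨-i - ((w.length : ℤ) - 1), fun j => ?_⟩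
  have hjl : (j : ℕ) < w.length := by simpa using j.2
  have hj2 : w.length - 1 - (j : ℕ) < w.length := by omega
  have key := hi ⟨w.length - 1 - (j : ℕ), hj2⟩
  have hg : w.reverse.get j = w.get ⟨w.length - 1 - (j : ℕ), hj2⟩ := by
    simp [List.get_eq_getElem, List.getElem_reverse]
  show y (-(-i - ((w.length : ℤ) - 1) + ((j : ℕ) : ℤ))) = w.reverse.get j
  rw [hg]
  have harg : -(-i - ((w.length : ℤ) - 1) + ((j : ℕ) : ℤ))
      = i + ((w.length - 1 - (j : ℕ) : ℕ) : ℤ) := by omega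
  rw [harg]
  exact key

lemma occursIn_neg_iff {A : Type*} (w : List A) (x : ℤ → A) :
    occursIn w (fun n => x (-n)) ↔ occursIn w.reverse x := by
  constructor
  · intro h
    have := occursIn_reverse w (fun n => x (-n)) h
    simpa using this
  · intro h
    have := occursIn_reverse w.reverse x h
    simpa using this

/-- Every configuration of a countable one-dimensional SFT is ultimately
periodic to the left and to the right. -/
theorem stmt_13 {A : Type*} [Finite A] (F : Set (List A)) (hF : F.Finite)
    (hcount : {x : ℤ → A | ∀ w ∈ F, ¬ occursIn w x}.Countable) :
    ∀ x ∈ {x : ℤ → A | ∀ w ∈ F, ¬ occursIn w x},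
      (∃ p : ℤ, 0 < p ∧ ∃ N : ℤ, ∀ n : ℤ, N ≤ n → x (n + p) = x n) ∧
      (∃ p : ℤ, 0 < p ∧ ∃ N : ℤ, ∀ n : ℤ, n ≤ N → x (n - p) = x n) := by
  intro x hx
  have hxX : ∀ w ∈ F, ¬ occursIn w x := hx
  constructor
  · exact right_ultimately_periodic F hF hcount x hxX
  · have hF'fin : (List.reverse '' F).Finite := hF.image _
    have hsub : {y : ℤ → A | ∀ w ∈ List.reverse '' F, ¬ occursIn w y}.Countable := by
      have himg : {y : ℤ → A | ∀ w ∈ List.reverse '' F, ¬ occursIn w y} ⊆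
          (fun (y : ℤ → A) (n : ℤ) => y (-n)) '' {x : ℤ → A | ∀ w ∈ F, ¬ occursIn w x} := by
        intro y hy
        refine ⟨fun n => y (-n), fun w hw hocc => ?_, by funext n; simp⟩
        exact hy w.reverse ⟨w, hw, rfl⟩ ((occursIn_neg_iff w y).mp hocc)
      exact Set.Countable.mono himg (hcount.image _)
    have hx' : ∀ w ∈ List.reverse '' F, ¬ occursIn w (fun n => x (-n)) := by
      rintro w ⟨v, hv, rfl⟩
      rw [occursIn_neg_iff v.reverse x, List.reverse_reverse]
      exact hxX v hv
    obtain ⟨p, hp, N, hN⟩ := right_ultimately_periodic _ hF'fin hsub (fun n => x (-n)) hx'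
    refine ⟨p, hp, -N, fun n hn => ?_⟩
    have key := hN (-n) (by omega)
    rw [show -(-n + p) = n - p by ring, neg_neg] at key
    exact key
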